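/- Define the squaring map Sq : H²(A,A) → H³(A,A) by Sq([φ]) = [φ∘φ], where (φ∘φ)(x,y,z) = φ(φ(x,y),z) − φ(x,φ(y,z)). If Sq is injective, then A is formally rigid: every formal deformation of A is equivalent to the trivial one. -/

import Mathlib

/-- A formal one-parameter deformation of `m₀`, given by its coefficients. -/
def IsDeformationOf {K A : Type*} [Field K] [AddCommGroup A] [Module K A]
    (m₀ : A →ₗ[K] A →ₗ[K] A) (m : ℕ → A →ₗ[K] A →ₗ[K] A) : Prop :=
  m 0 = m₀ ∧ ∀ (k : ℕ) (x y z : A),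
    ∑ p ∈ Finset.HasAntidiagonal.antidiagonal k,
      (m p.1 (m p.2 x y) z - m p.1 x (m p.2 y z)) = 0

/-- Equivalence of formal deformations via `F_t = Id + t f₁ + ⋯`. -/
def AreEquivalentDeformations {K A : Type*} [Field K] [AddCommGroup A] [Module K A]
    (m m' : ℕ → A →ₗ[K] A →ₗ[K] A) : Prop :=
  ∃ F : ℕ → A →ₗ[K] A, F 0 = LinearMap.id ∧
    ∀ (k : ℕ) (x y : A),
      ∑ p ∈ Finset.HasAntidiagonal.antidiagonal k, F p.1 (m p.2 x y) =
        ∑ p ∈ Finset.HasAntidiagonal.antidiagonal k, ∑ q ∈ Finset.HasAntidiagonal.antidiagonal p.2,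
          m' p.1 (F q.1 x) (F q.2 y)

/-- The trivial deformation of `m₀`. -/
def TrivialDeformation {K A : Type*} [Field K] [AddCommGroup A] [Module K A]
    (m₀ : A →ₗ[K] A →ₗ[K] A) : ℕ → A →ₗ[K] A →ₗ[K] A :=
  fun k => if k = 0 then m₀ else 0

/-- A Hochschild 2-cocycle with respect to `m₀`. -/
def IsTwoCocycle {K A : Type*} [Field K] [AddCommGroup A] [Module K A]
    (m₀ φ : A →ₗ[K] A →ₗ[K] A) : Prop :=
  ∀ x y z : A, m₀ x (φ y z) - φ (m₀ x y) z + φ x (m₀ y z) - m₀ (φ x y) z = 0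


open Finset

section SumTools
variable {M : Type*} [AddCommMonoid M]

/-- Reassociation of a triple antidiagonal sum: `a+(b+c)=k` vs `(a+b)+c=k`. -/
lemma ad_assoc (k : ℕ) (f : ℕ → ℕ → ℕ → M) :
    ∑ p ∈ antidiagonal k, ∑ q ∈ antidiagonal p.2, f p.1 q.1 q.2
      = ∑ p ∈ antidiagonal k, ∑ q ∈ antidiagonal p.1, f q.1 q.2 p.2 := by
  rw [Finset.sum_sigma', Finset.sum_sigma']
  refine Finset.sum_nbij' (fun x => ⟨(x.1.1 + x.2.1, x.2.2), (x.1.1, x.2.1)⟩)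
    (fun x => ⟨(x.2.1, x.2.2 + x.1.2), (x.2.2, x.1.2)⟩) ?_ ?_ ?_ ?_ ?_ <;>
    simp only [Finset.mem_sigma, Finset.mem_antidiagonal] <;>
    rintro ⟨⟨a, b⟩, ⟨c, d⟩⟩ h <;> simp_all <;> omega

/-- Swap the innermost two indices. -/
lemma ad_swap (k : ℕ) (f : ℕ → ℕ → M) :
    ∑ p ∈ antidiagonal k, f p.1 p.2 = ∑ p ∈ antidiagonal k, f p.2 p.1 := by
  rw [← Finset.Nat.sum_antidiagonal_swap]; rfl

/-- Swap the outermost two indices of a right-nested triple sum. -/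
lemma ad_swap12 (k : ℕ) (f : ℕ → ℕ → ℕ → M) :
    ∑ p ∈ antidiagonal k, ∑ q ∈ antidiagonal p.2, f p.1 q.1 q.2
      = ∑ p ∈ antidiagonal k, ∑ q ∈ antidiagonal p.2, f q.1 p.1 q.2 := by
  rw [Finset.sum_sigma', Finset.sum_sigma']
  refine Finset.sum_nbij' (fun x => ⟨(x.2.1, x.1.1 + x.2.2), (x.1.1, x.2.2)⟩)
    (fun x => ⟨(x.2.1, x.1.1 + x.2.2), (x.1.1, x.2.2)⟩) ?_ ?_ ?_ ?_ ?_ <;>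
    simp only [Finset.mem_sigma, Finset.mem_antidiagonal] <;>
    rintro ⟨⟨a, b⟩, ⟨c, d⟩⟩ h <;> simp_all <;> omega

lemma ad_single_left (k : ℕ) (f : ℕ → M) :
    ∑ p ∈ antidiagonal k, (if p.1 = 0 then f p.2 else 0) = f k := by
  rw [Finset.sum_eq_single (0, k)]
  · simp
  · rintro ⟨a, b⟩ h hne
    simp only [Finset.HasAntidiagonal.mem_antidiagonal] at h
    have : a ≠ 0 := fun ha => hne (by simp [ha, ← h])
    simp [this]
  · simp

lemma ad_single_right (k : ℕ) (f : ℕ → M) :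
    ∑ p ∈ antidiagonal k, (if p.2 = 0 then f p.1 else 0) = f k := by
  rw [ad_swap k fun a b => if b = 0 then f a else 0, ad_single_left]

end SumTools

section Defs
variable {K A : Type*} [Field K] [AddCommGroup A] [Module K A]

/-- Convolution-left-inverse of a sequence of endomorphisms with `F 0 = id`. -/
noncomputable def Ginv (F : ℕ → A →ₗ[K] A) : ℕ → A →ₗ[K] A
  | 0 => LinearMap.id
  | (k+1) => -∑ q ∈ (range (k+1)).attach, Ginv F q.1 ∘ₗ F (k+1-q.1)
  decreasing_by exact mem_range.mp q.2

lemma Ginv_zero (F : ℕ → A →ₗ[K] A) : Ginv F 0 = LinearMap.id := by rw [Ginv]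

lemma cGF (F : ℕ → A →ₗ[K] A) (hF0 : F 0 = LinearMap.id) (k : ℕ) :
    ∑ p ∈ antidiagonal k, Ginv F p.1 ∘ₗ F p.2
      = if k = 0 then (LinearMap.id : A →ₗ[K] A) else 0 := by
  cases k with
  | zero => simp [Ginv_zero, hF0]
  | succ k =>
    rw [Finset.Nat.sum_antidiagonal_eq_sum_range_succ
      (fun a b => Ginv F a ∘ₗ F b), Finset.sum_range_succ]
    simp only [Nat.sub_self, hF0, LinearMap.comp_id]
    rw [Ginv]
    rw [Finset.sum_attach (range (k+1)) (fun q => Ginv F q ∘ₗ F (k+1-q))]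
    simp

lemma cGF_apply (F : ℕ → A →ₗ[K] A) (hF0 : F 0 = LinearMap.id) (k : ℕ) (a : A) :
    ∑ p ∈ antidiagonal k, Ginv F p.1 (F p.2 a) = if k = 0 then a else 0 := by
  have := congrArg (fun (f : A →ₗ[K] A) => f a) (cGF F hF0 k)
  simp only [LinearMap.sum_apply, LinearMap.comp_apply] at this
  rw [this]
  split <;> simp

lemma Ginv_congr (F F' : ℕ → A →ₗ[K] A) : ∀ (k : ℕ), (∀ j ≤ k, F j = F' j) →
    Ginv F k = Ginv F' k := by
  intro k
  induction k using Nat.strong_induction_on with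
  | _ k ih =>
    intro h
    cases k with
    | zero => rw [Ginv_zero, Ginv_zero]
    | succ k =>
      rw [Ginv, Ginv]
      congr 1
      refine Finset.sum_congr rfl fun q hq => ?_
      have hq' : q.1 < k + 1 := mem_range.mp q.2
      rw [ih q.1 hq' (fun j hj => h j (by omega)), h (k+1-q.1) (by omega)]

/-- `m ∘ (G ⊗ G)` as coefficients of bilinear maps. -/
noncomputable def Pser (m : ℕ → A →ₗ[K] A →ₗ[K] A) (G : ℕ → A →ₗ[K] A) (c : ℕ) :
    A →ₗ[K] A →ₗ[K] A :=
  ∑ q ∈ antidiagonal c, ∑ v ∈ antidiagonal q.2, (m q.1).compl₁₂ (G v.1) (G v.2)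

/-- The push-forward `F * m ∘ (G ⊗ G)` of the deformation `m` along `F`. -/
noncomputable def Mt (F : ℕ → A →ₗ[K] A) (m : ℕ → A →ₗ[K] A →ₗ[K] A) (k : ℕ) :
    A →ₗ[K] A →ₗ[K] A :=
  ∑ p ∈ antidiagonal k, (Pser m (Ginv F) p.2).compr₂ (F p.1)

lemma Pser_apply (m : ℕ → A →ₗ[K] A →ₗ[K] A) (G : ℕ → A →ₗ[K] A) (c : ℕ) (x y : A) :
    Pser m G c x y
      = ∑ q ∈ antidiagonal c, ∑ v ∈ antidiagonal q.2, m q.1 (G v.1 x) (G v.2 y) := by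
  simp [Pser, LinearMap.sum_apply]

lemma Mt_apply (F : ℕ → A →ₗ[K] A) (m : ℕ → A →ₗ[K] A →ₗ[K] A) (k : ℕ) (x y : A) :
    Mt F m k x y = ∑ p ∈ antidiagonal k, ∑ q ∈ antidiagonal p.2, ∑ v ∈ antidiagonal q.2,
      F p.1 (m q.1 (Ginv F v.1 x) (Ginv F v.2 y)) := by
  simp [Mt, Pser, LinearMap.sum_apply, map_sum]

end Defs

set_option maxHeartbeats 1000000

section Core
variable {K A : Type*} [Field K] [AddCommGroup A] [Module K A]
variable (F : ℕ → A →ₗ[K] A) (m : ℕ → A →ₗ[K] A →ₗ[K] A)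

lemma lemH (hF0 : F 0 = LinearMap.id) (w : ℕ) (x y : A) :
    ∑ u ∈ antidiagonal w, Ginv F u.1 (Mt F m u.2 x y)
      = ∑ q ∈ antidiagonal w, ∑ v ∈ antidiagonal q.2,
          m q.1 (Ginv F v.1 x) (Ginv F v.2 y) := by
  calc ∑ u ∈ antidiagonal w, Ginv F u.1 (Mt F m u.2 x y)
      = ∑ u ∈ antidiagonal w, ∑ p ∈ antidiagonal u.2,
          ∑ q ∈ antidiagonal p.2, ∑ v ∈ antidiagonal q.2,
            Ginv F u.1 (F p.1 (m q.1 (Ginv F v.1 x) (Ginv F v.2 y))) := by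
        refine Finset.sum_congr rfl fun u _ => ?_
        rw [Mt_apply, map_sum]
        refine Finset.sum_congr rfl fun p _ => ?_
        simp [map_sum]
    _ = ∑ u ∈ antidiagonal w, ∑ p ∈ antidiagonal u.1,
          ∑ q ∈ antidiagonal u.2, ∑ v ∈ antidiagonal q.2,
            Ginv F p.1 (F p.2 (m q.1 (Ginv F v.1 x) (Ginv F v.2 y))) :=
        ad_assoc w (fun a b t => ∑ q ∈ antidiagonal t, ∑ v ∈ antidiagonal q.2,
          Ginv F a (F b (m q.1 (Ginv F v.1 x) (Ginv F v.2 y))))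
    _ = ∑ u ∈ antidiagonal w, (if u.1 = 0 then (∑ q ∈ antidiagonal u.2,
          ∑ v ∈ antidiagonal q.2, m q.1 (Ginv F v.1 x) (Ginv F v.2 y)) else 0) := by
        refine Finset.sum_congr rfl fun u _ => ?_
        rw [Finset.sum_comm]
        have : ∀ q ∈ antidiagonal u.2,
            (∑ p ∈ antidiagonal u.1, ∑ v ∈ antidiagonal q.2,
              Ginv F p.1 (F p.2 (m q.1 (Ginv F v.1 x) (Ginv F v.2 y))))
            = ∑ v ∈ antidiagonal q.2, (if u.1 = 0 then
                m q.1 (Ginv F v.1 x) (Ginv F v.2 y) else 0) := by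
          intro q _
          rw [Finset.sum_comm]
          exact Finset.sum_congr rfl fun v _ => cGF_apply F hF0 u.1 _
        trans (∑ q ∈ antidiagonal u.2, ∑ v ∈ antidiagonal q.2, (if u.1 = 0 then
            m q.1 (Ginv F v.1 x) (Ginv F v.2 y) else 0))
        · exact Finset.sum_congr rfl this
        · split <;> simp
    _ = _ := ad_single_left w (fun t => ∑ q ∈ antidiagonal t,
        ∑ v ∈ antidiagonal q.2, m q.1 (Ginv F v.1 x) (Ginv F v.2 y))

end Core

section CoreI
variable {K A : Type*} [Field K] [AddCommGroup A] [Module K A]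
variable (F : ℕ → A →ₗ[K] A) (m : ℕ → A →ₗ[K] A →ₗ[K] A)

lemma push_sumL (f : A →ₗ[K] A) (g : A →ₗ[K] A →ₗ[K] A) (s : Finset (ℕ × ℕ))
    (a : ℕ × ℕ → A) (b : A) :
    ∑ v ∈ s, f (g (a v) b) = f (g (∑ v ∈ s, a v) b) := by
  simp [map_sum, LinearMap.sum_apply]

lemma push_sumR (f : A →ₗ[K] A) (g : A →ₗ[K] A →ₗ[K] A) (s : Finset (ℕ × ℕ))
    (a : ℕ × ℕ → A) (b : A) :
    ∑ v ∈ s, f (g b (a v)) = f (g b (∑ v ∈ s, a v)) := by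
  simp [map_sum]

lemma lemI1 (hF0 : F 0 = LinearMap.id) (t : ℕ) (x u : A) :
    ∑ c ∈ antidiagonal t, Mt F m c.1 (F c.2 x) u
      = ∑ p ∈ antidiagonal t, ∑ q ∈ antidiagonal p.2,
          F p.1 (m q.1 x (Ginv F q.2 u)) := by
  calc ∑ c ∈ antidiagonal t, Mt F m c.1 (F c.2 x) u
      = ∑ c ∈ antidiagonal t, ∑ p ∈ antidiagonal c.1,
          ∑ q ∈ antidiagonal p.2, ∑ v ∈ antidiagonal q.2,
            F p.1 (m q.1 (Ginv F v.1 (F c.2 x)) (Ginv F v.2 u)) := by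
        exact Finset.sum_congr rfl fun c _ => Mt_apply F m c.1 (F c.2 x) u
    _ = ∑ c ∈ antidiagonal t, ∑ p ∈ antidiagonal c.2,
          ∑ q ∈ antidiagonal p.1, ∑ v ∈ antidiagonal q.2,
            F c.1 (m q.1 (Ginv F v.1 (F p.2 x)) (Ginv F v.2 u)) :=
        (ad_assoc t (fun a b r => ∑ q ∈ antidiagonal b, ∑ v ∈ antidiagonal q.2,
          F a (m q.1 (Ginv F v.1 (F r x)) (Ginv F v.2 u)))).symm
    _ = ∑ c ∈ antidiagonal t, ∑ p ∈ antidiagonal c.2,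
          ∑ q ∈ antidiagonal p.2, ∑ v ∈ antidiagonal q.1,
            F c.1 (m p.1 (Ginv F v.1 (F q.2 x)) (Ginv F v.2 u)) := by
        refine Finset.sum_congr rfl fun c _ => ?_
        exact (ad_assoc c.2 (fun a b r => ∑ v ∈ antidiagonal b,
          F c.1 (m a (Ginv F v.1 (F r x)) (Ginv F v.2 u)))).symm
    _ = ∑ c ∈ antidiagonal t, ∑ p ∈ antidiagonal c.2,
          ∑ q ∈ antidiagonal p.2, ∑ v ∈ antidiagonal q.1,
            F c.1 (m p.1 (Ginv F v.2 (F q.2 x)) (Ginv F v.1 u)) := by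
        refine Finset.sum_congr rfl fun c _ => Finset.sum_congr rfl fun p _ =>
          Finset.sum_congr rfl fun q _ => ?_
        exact ad_swap q.1 (fun a b =>
          F c.1 (m p.1 (Ginv F a (F q.2 x)) (Ginv F b u)))
    _ = ∑ c ∈ antidiagonal t, ∑ p ∈ antidiagonal c.2,
          ∑ q ∈ antidiagonal p.2, ∑ v ∈ antidiagonal q.2,
            F c.1 (m p.1 (Ginv F v.1 (F v.2 x)) (Ginv F q.1 u)) := by
        refine Finset.sum_congr rfl fun c _ => Finset.sum_congr rfl fun p _ => ?_
        exact (ad_assoc p.2 (fun a b r => F c.1 (m p.1 (Ginv F b (F r x)) (Ginv F a u)))).symm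
          |>.trans (Finset.sum_congr rfl fun q _ => rfl)
    _ = ∑ c ∈ antidiagonal t, ∑ p ∈ antidiagonal c.2, ∑ q ∈ antidiagonal p.2,
          (if q.2 = 0 then F c.1 (m p.1 x (Ginv F q.1 u)) else 0) := by
        refine Finset.sum_congr rfl fun c _ => Finset.sum_congr rfl fun p _ =>
          Finset.sum_congr rfl fun q _ => ?_
        rw [push_sumL (F c.1) (m p.1) _ _ (Ginv F q.1 u), cGF_apply F hF0 q.2 x]
        split <;> simp
    _ = _ := by
        refine Finset.sum_congr rfl fun c _ => Finset.sum_congr rfl fun p _ => ?_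
        exact ad_single_right p.2 (fun i => F c.1 (m p.1 x (Ginv F i u)))

end CoreI

section CoreE
variable {K A : Type*} [Field K] [AddCommGroup A] [Module K A]
variable (F : ℕ → A →ₗ[K] A) (m : ℕ → A →ₗ[K] A →ₗ[K] A)

lemma lemE (hF0 : F 0 = LinearMap.id) (k : ℕ) (x y : A) :
    ∑ a ∈ antidiagonal k, ∑ b ∈ antidiagonal a.2,
        Mt F m a.1 (F b.1 x) (F b.2 y)
      = ∑ p ∈ antidiagonal k, F p.1 (m p.2 x y) := by
  calc ∑ a ∈ antidiagonal k, ∑ b ∈ antidiagonal a.2, Mt F m a.1 (F b.1 x) (F b.2 y)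
      = ∑ a ∈ antidiagonal k, ∑ b ∈ antidiagonal a.1,
          Mt F m b.1 (F b.2 x) (F a.2 y) :=
        ad_assoc k (fun J r s => Mt F m J (F r x) (F s y))
    _ = ∑ a ∈ antidiagonal k, ∑ p ∈ antidiagonal a.1, ∑ q ∈ antidiagonal p.2,
          F p.1 (m q.1 x (Ginv F q.2 (F a.2 y))) := by
        exact Finset.sum_congr rfl fun a _ => lemI1 F m hF0 a.1 x (F a.2 y)
    _ = ∑ a ∈ antidiagonal k, ∑ p ∈ antidiagonal a.2, ∑ q ∈ antidiagonal p.1,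
          F a.1 (m q.1 x (Ginv F q.2 (F p.2 y))) :=
        (ad_assoc k (fun p t s => ∑ q ∈ antidiagonal t,
          F p (m q.1 x (Ginv F q.2 (F s y))))).symm
    _ = ∑ a ∈ antidiagonal k, ∑ p ∈ antidiagonal a.2, ∑ q ∈ antidiagonal p.2,
          F a.1 (m p.1 x (Ginv F q.1 (F q.2 y))) := by
        refine Finset.sum_congr rfl fun a _ => ?_
        exact (ad_assoc a.2 (fun b1 b2 r =>
          F a.1 (m b1 x (Ginv F b2 (F r y))))).symm
    _ = ∑ a ∈ antidiagonal k, ∑ p ∈ antidiagonal a.2,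
          (if p.2 = 0 then F a.1 (m p.1 x y) else 0) := by
        refine Finset.sum_congr rfl fun a _ => Finset.sum_congr rfl fun p _ => ?_
        rw [push_sumR (F a.1) (m p.1) _ _ x, cGF_apply F hF0 p.2 y]
        split <;> simp
    _ = _ := by
        refine Finset.sum_congr rfl fun a _ => ?_
        exact ad_single_right a.2 (fun i => F a.1 (m i x y))

end CoreE

lemma Unorm {K A : Type*} [Field K] [AddCommGroup A] [Module K A]
    (F : ℕ → A →ₗ[K] A) (m : ℕ → A →ₗ[K] A →ₗ[K] A) (n : ℕ) (x y z : A) :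
    ∑ p ∈ antidiagonal n, ∑ q ∈ antidiagonal p.2, ∑ r ∈ antidiagonal q.2,
          ∑ s ∈ antidiagonal r.2, m p.1 (m r.1 (Ginv F s.1 x) (Ginv F s.2 y)) (Ginv F q.1 z)
      = ∑ p ∈ antidiagonal n, ∑ q ∈ antidiagonal p.2, ∑ r ∈ antidiagonal q.2,
          ∑ s ∈ antidiagonal r.2, m s.1 (m s.2 (Ginv F p.1 x) (Ginv F q.1 y)) (Ginv F r.1 z) := by
  calc ∑ p ∈ antidiagonal n, ∑ q ∈ antidiagonal p.2, ∑ r ∈ antidiagonal q.2,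
          ∑ s ∈ antidiagonal r.2, m p.1 (m r.1 (Ginv F s.1 x) (Ginv F s.2 y)) (Ginv F q.1 z)
    _ = ∑ p ∈ antidiagonal n, ∑ q ∈ antidiagonal p.2, ∑ r ∈ antidiagonal q.2,
          ∑ s ∈ antidiagonal r.2, m p.1 (m s.1 (Ginv F r.1 x) (Ginv F s.2 y)) (Ginv F q.1 z) := by
        refine Finset.sum_congr rfl fun p _ => Finset.sum_congr rfl fun q _ => ?_
        exact ad_swap12 q.2 (fun a b c => m p.1 (m a (Ginv F b x) (Ginv F c y)) (Ginv F q.1 z))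
    _ = ∑ p ∈ antidiagonal n, ∑ q ∈ antidiagonal p.2, ∑ r ∈ antidiagonal q.2,
          ∑ s ∈ antidiagonal r.2, m p.1 (m s.1 (Ginv F q.1 x) (Ginv F s.2 y)) (Ginv F r.1 z) := by
        refine Finset.sum_congr rfl fun p _ => ?_
        exact ad_swap12 p.2 (fun a b c => ∑ s ∈ antidiagonal c, m p.1 (m s.1 (Ginv F b x) (Ginv F s.2 y)) (Ginv F a z))
    _ = ∑ p ∈ antidiagonal n, ∑ q ∈ antidiagonal p.2, ∑ r ∈ antidiagonal q.2,
          ∑ s ∈ antidiagonal r.2, m q.1 (m s.1 (Ginv F p.1 x) (Ginv F s.2 y)) (Ginv F r.1 z) := by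
        exact ad_swap12 n (fun a b c => ∑ r ∈ antidiagonal c, ∑ s ∈ antidiagonal r.2, m a (m s.1 (Ginv F b x) (Ginv F s.2 y)) (Ginv F r.1 z))
    _ = ∑ p ∈ antidiagonal n, ∑ q ∈ antidiagonal p.2, ∑ r ∈ antidiagonal q.2,
          ∑ s ∈ antidiagonal r.2, m q.1 (m s.2 (Ginv F p.1 x) (Ginv F s.1 y)) (Ginv F r.1 z) := by
        refine Finset.sum_congr rfl fun p _ => Finset.sum_congr rfl fun q _ => Finset.sum_congr rfl fun r _ => ?_
        exact ad_swap r.2 (fun a b => m q.1 (m a (Ginv F p.1 x) (Ginv F b y)) (Ginv F r.1 z))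
    _ = ∑ p ∈ antidiagonal n, ∑ q ∈ antidiagonal p.2, ∑ r ∈ antidiagonal q.2,
          ∑ s ∈ antidiagonal r.2, m q.1 (m s.2 (Ginv F p.1 x) (Ginv F r.1 y)) (Ginv F s.1 z) := by
        refine Finset.sum_congr rfl fun p _ => Finset.sum_congr rfl fun q _ => ?_
        exact ad_swap12 q.2 (fun a b c => m q.1 (m c (Ginv F p.1 x) (Ginv F b y)) (Ginv F a z))
    _ = ∑ p ∈ antidiagonal n, ∑ q ∈ antidiagonal p.2, ∑ r ∈ antidiagonal q.2,
          ∑ s ∈ antidiagonal r.2, m r.1 (m s.2 (Ginv F p.1 x) (Ginv F q.1 y)) (Ginv F s.1 z) := by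
        refine Finset.sum_congr rfl fun p _ => ?_
        exact ad_swap12 p.2 (fun a b c => ∑ s ∈ antidiagonal c, m a (m s.2 (Ginv F p.1 x) (Ginv F b y)) (Ginv F s.1 z))
    _ = ∑ p ∈ antidiagonal n, ∑ q ∈ antidiagonal p.2, ∑ r ∈ antidiagonal q.2,
          ∑ s ∈ antidiagonal r.2, m s.1 (m s.2 (Ginv F p.1 x) (Ginv F q.1 y)) (Ginv F r.1 z) := by
        refine Finset.sum_congr rfl fun p _ => Finset.sum_congr rfl fun q _ => ?_
        exact ad_swap12 q.2 (fun a b c => m a (m c (Ginv F p.1 x) (Ginv F q.1 y)) (Ginv F b z))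

lemma Vnorm {K A : Type*} [Field K] [AddCommGroup A] [Module K A]
    (F : ℕ → A →ₗ[K] A) (m : ℕ → A →ₗ[K] A →ₗ[K] A) (n : ℕ) (x y z : A) :
    ∑ p ∈ antidiagonal n, ∑ q ∈ antidiagonal p.2, ∑ r ∈ antidiagonal q.2,
          ∑ s ∈ antidiagonal r.2, m p.1 (Ginv F q.1 x) (m r.1 (Ginv F s.1 y) (Ginv F s.2 z))
      = ∑ p ∈ antidiagonal n, ∑ q ∈ antidiagonal p.2, ∑ r ∈ antidiagonal q.2,
          ∑ s ∈ antidiagonal r.2, m s.1 (Ginv F p.1 x) (m s.2 (Ginv F q.1 y) (Ginv F r.1 z)) := by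
  calc ∑ p ∈ antidiagonal n, ∑ q ∈ antidiagonal p.2, ∑ r ∈ antidiagonal q.2,
          ∑ s ∈ antidiagonal r.2, m p.1 (Ginv F q.1 x) (m r.1 (Ginv F s.1 y) (Ginv F s.2 z))
    _ = ∑ p ∈ antidiagonal n, ∑ q ∈ antidiagonal p.2, ∑ r ∈ antidiagonal q.2,
          ∑ s ∈ antidiagonal r.2, m q.1 (Ginv F p.1 x) (m r.1 (Ginv F s.1 y) (Ginv F s.2 z)) := by
        exact ad_swap12 n (fun a b c => ∑ r ∈ antidiagonal c, ∑ s ∈ antidiagonal r.2, m a (Ginv F b x) (m r.1 (Ginv F s.1 y) (Ginv F s.2 z)))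
    _ = ∑ p ∈ antidiagonal n, ∑ q ∈ antidiagonal p.2, ∑ r ∈ antidiagonal q.2,
          ∑ s ∈ antidiagonal r.2, m q.1 (Ginv F p.1 x) (m s.1 (Ginv F r.1 y) (Ginv F s.2 z)) := by
        refine Finset.sum_congr rfl fun p _ => Finset.sum_congr rfl fun q _ => ?_
        exact ad_swap12 q.2 (fun a b c => m q.1 (Ginv F p.1 x) (m a (Ginv F b y) (Ginv F c z)))
    _ = ∑ p ∈ antidiagonal n, ∑ q ∈ antidiagonal p.2, ∑ r ∈ antidiagonal q.2,
          ∑ s ∈ antidiagonal r.2, m r.1 (Ginv F p.1 x) (m s.1 (Ginv F q.1 y) (Ginv F s.2 z)) := by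
        refine Finset.sum_congr rfl fun p _ => ?_
        exact ad_swap12 p.2 (fun a b c => ∑ s ∈ antidiagonal c, m a (Ginv F p.1 x) (m s.1 (Ginv F b y) (Ginv F s.2 z)))
    _ = ∑ p ∈ antidiagonal n, ∑ q ∈ antidiagonal p.2, ∑ r ∈ antidiagonal q.2,
          ∑ s ∈ antidiagonal r.2, m r.1 (Ginv F p.1 x) (m s.2 (Ginv F q.1 y) (Ginv F s.1 z)) := by
        refine Finset.sum_congr rfl fun p _ => Finset.sum_congr rfl fun q _ => Finset.sum_congr rfl fun r _ => ?_
        exact ad_swap r.2 (fun a b => m r.1 (Ginv F p.1 x) (m a (Ginv F q.1 y) (Ginv F b z)))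
    _ = ∑ p ∈ antidiagonal n, ∑ q ∈ antidiagonal p.2, ∑ r ∈ antidiagonal q.2,
          ∑ s ∈ antidiagonal r.2, m s.1 (Ginv F p.1 x) (m s.2 (Ginv F q.1 y) (Ginv F r.1 z)) := by
        refine Finset.sum_congr rfl fun p _ => Finset.sum_congr rfl fun q _ => ?_
        exact ad_swap12 q.2 (fun a b c => m a (Ginv F p.1 x) (m c (Ginv F q.1 y) (Ginv F b z)))


section CoreT
variable {K A : Type*} [Field K] [AddCommGroup A] [Module K A]
variable (F : ℕ → A →ₗ[K] A) (m : ℕ → A →ₗ[K] A →ₗ[K] A)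

lemma lemT1 (hF0 : F 0 = LinearMap.id) (w : ℕ) (x y z : A) :
    ∑ c ∈ antidiagonal w, Mt F m c.1 (Mt F m c.2 x y) z
      = ∑ c ∈ antidiagonal w, ∑ p ∈ antidiagonal c.2, ∑ q ∈ antidiagonal p.2,
          F c.1 (m p.1 (Pser m (Ginv F) q.2 x y) (Ginv F q.1 z)) := by
  calc ∑ c ∈ antidiagonal w, Mt F m c.1 (Mt F m c.2 x y) z
      = ∑ c ∈ antidiagonal w, ∑ p ∈ antidiagonal c.1,
          ∑ q ∈ antidiagonal p.2, ∑ v ∈ antidiagonal q.2,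
            F p.1 (m q.1 (Ginv F v.1 (Mt F m c.2 x y)) (Ginv F v.2 z)) := by
        exact Finset.sum_congr rfl fun c _ => Mt_apply F m c.1 (Mt F m c.2 x y) z
    _ = ∑ c ∈ antidiagonal w, ∑ p ∈ antidiagonal c.2,
          ∑ q ∈ antidiagonal p.1, ∑ v ∈ antidiagonal q.2,
            F c.1 (m q.1 (Ginv F v.1 (Mt F m p.2 x y)) (Ginv F v.2 z)) :=
        (ad_assoc w (fun a b r => ∑ q ∈ antidiagonal b, ∑ v ∈ antidiagonal q.2,
          F a (m q.1 (Ginv F v.1 (Mt F m r x y)) (Ginv F v.2 z)))).symm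
    _ = ∑ c ∈ antidiagonal w, ∑ p ∈ antidiagonal c.2,
          ∑ q ∈ antidiagonal p.2, ∑ v ∈ antidiagonal q.1,
            F c.1 (m p.1 (Ginv F v.1 (Mt F m q.2 x y)) (Ginv F v.2 z)) := by
        refine Finset.sum_congr rfl fun c _ => ?_
        exact (ad_assoc c.2 (fun a b r => ∑ v ∈ antidiagonal b,
          F c.1 (m a (Ginv F v.1 (Mt F m r x y)) (Ginv F v.2 z)))).symm
    _ = ∑ c ∈ antidiagonal w, ∑ p ∈ antidiagonal c.2,
          ∑ q ∈ antidiagonal p.2, ∑ v ∈ antidiagonal q.1,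
            F c.1 (m p.1 (Ginv F v.2 (Mt F m q.2 x y)) (Ginv F v.1 z)) := by
        refine Finset.sum_congr rfl fun c _ => Finset.sum_congr rfl fun p _ =>
          Finset.sum_congr rfl fun q _ => ?_
        exact ad_swap q.1 (fun a b =>
          F c.1 (m p.1 (Ginv F a (Mt F m q.2 x y)) (Ginv F b z)))
    _ = ∑ c ∈ antidiagonal w, ∑ p ∈ antidiagonal c.2,
          ∑ q ∈ antidiagonal p.2, ∑ v ∈ antidiagonal q.2,
            F c.1 (m p.1 (Ginv F v.1 (Mt F m v.2 x y)) (Ginv F q.1 z)) := by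
        refine Finset.sum_congr rfl fun c _ => Finset.sum_congr rfl fun p _ => ?_
        exact (ad_assoc p.2 (fun a b r =>
          F c.1 (m p.1 (Ginv F b (Mt F m r x y)) (Ginv F a z)))).symm
    _ = _ := by
        refine Finset.sum_congr rfl fun c _ => Finset.sum_congr rfl fun p _ =>
          Finset.sum_congr rfl fun q _ => ?_
        rw [push_sumL (F c.1) (m p.1) _ _ (Ginv F q.1 z),
          lemH F m hF0 q.2 x y, ← Pser_apply]

lemma lemT2 (hF0 : F 0 = LinearMap.id) (w : ℕ) (x y z : A) :
    ∑ c ∈ antidiagonal w, Mt F m c.1 x (Mt F m c.2 y z)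
      = ∑ c ∈ antidiagonal w, ∑ p ∈ antidiagonal c.2, ∑ q ∈ antidiagonal p.2,
          F c.1 (m p.1 (Ginv F q.1 x) (Pser m (Ginv F) q.2 y z)) := by
  calc ∑ c ∈ antidiagonal w, Mt F m c.1 x (Mt F m c.2 y z)
      = ∑ c ∈ antidiagonal w, ∑ p ∈ antidiagonal c.1,
          ∑ q ∈ antidiagonal p.2, ∑ v ∈ antidiagonal q.2,
            F p.1 (m q.1 (Ginv F v.1 x) (Ginv F v.2 (Mt F m c.2 y z))) := by
        exact Finset.sum_congr rfl fun c _ => Mt_apply F m c.1 x (Mt F m c.2 y z)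
    _ = ∑ c ∈ antidiagonal w, ∑ p ∈ antidiagonal c.2,
          ∑ q ∈ antidiagonal p.1, ∑ v ∈ antidiagonal q.2,
            F c.1 (m q.1 (Ginv F v.1 x) (Ginv F v.2 (Mt F m p.2 y z))) :=
        (ad_assoc w (fun a b r => ∑ q ∈ antidiagonal b, ∑ v ∈ antidiagonal q.2,
          F a (m q.1 (Ginv F v.1 x) (Ginv F v.2 (Mt F m r y z))))).symm
    _ = ∑ c ∈ antidiagonal w, ∑ p ∈ antidiagonal c.2,
          ∑ q ∈ antidiagonal p.2, ∑ v ∈ antidiagonal q.1,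
            F c.1 (m p.1 (Ginv F v.1 x) (Ginv F v.2 (Mt F m q.2 y z))) := by
        refine Finset.sum_congr rfl fun c _ => ?_
        exact (ad_assoc c.2 (fun a b r => ∑ v ∈ antidiagonal b,
          F c.1 (m a (Ginv F v.1 x) (Ginv F v.2 (Mt F m r y z))))).symm
    _ = ∑ c ∈ antidiagonal w, ∑ p ∈ antidiagonal c.2,
          ∑ q ∈ antidiagonal p.2, ∑ v ∈ antidiagonal q.2,
            F c.1 (m p.1 (Ginv F q.1 x) (Ginv F v.1 (Mt F m v.2 y z))) := by
        refine Finset.sum_congr rfl fun c _ => Finset.sum_congr rfl fun p _ => ?_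
        exact (ad_assoc p.2 (fun a b r =>
          F c.1 (m p.1 (Ginv F a x) (Ginv F b (Mt F m r y z))))).symm
    _ = _ := by
        refine Finset.sum_congr rfl fun c _ => Finset.sum_congr rfl fun p _ =>
          Finset.sum_congr rfl fun q _ => ?_
        rw [push_sumR (F c.1) (m p.1) _ _ (Ginv F q.1 x),
          lemH F m hF0 q.2 y z, ← Pser_apply]

end CoreT

section CoreA
variable {K A : Type*} [Field K] [AddCommGroup A] [Module K A]
variable (F : ℕ → A →ₗ[K] A) (m : ℕ → A →ₗ[K] A →ₗ[K] A)

lemma lemUV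
    (hm2 : ∀ (k : ℕ) (x y z : A), ∑ p ∈ antidiagonal k,
      (m p.1 (m p.2 x y) z - m p.1 x (m p.2 y z)) = 0)
    (n : ℕ) (x y z : A) :
    ∑ p ∈ antidiagonal n, ∑ q ∈ antidiagonal p.2,
        m p.1 (Pser m (Ginv F) q.2 x y) (Ginv F q.1 z)
      = ∑ p ∈ antidiagonal n, ∑ q ∈ antidiagonal p.2,
          m p.1 (Ginv F q.1 x) (Pser m (Ginv F) q.2 y z) := by
  calc ∑ p ∈ antidiagonal n, ∑ q ∈ antidiagonal p.2,
        m p.1 (Pser m (Ginv F) q.2 x y) (Ginv F q.1 z)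
      = ∑ p ∈ antidiagonal n, ∑ q ∈ antidiagonal p.2, ∑ r ∈ antidiagonal q.2,
          ∑ s ∈ antidiagonal r.2,
            m p.1 (m r.1 (Ginv F s.1 x) (Ginv F s.2 y)) (Ginv F q.1 z) := by
        refine Finset.sum_congr rfl fun p _ => Finset.sum_congr rfl fun q _ => ?_
        rw [Pser_apply]
        simp only [map_sum, LinearMap.sum_apply]
    _ = ∑ p ∈ antidiagonal n, ∑ q ∈ antidiagonal p.2, ∑ r ∈ antidiagonal q.2,
          ∑ s ∈ antidiagonal r.2,
            m s.1 (m s.2 (Ginv F p.1 x) (Ginv F q.1 y)) (Ginv F r.1 z) :=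
        Unorm F m n x y z
    _ = ∑ p ∈ antidiagonal n, ∑ q ∈ antidiagonal p.2, ∑ r ∈ antidiagonal q.2,
          ∑ s ∈ antidiagonal r.2,
            m s.1 (Ginv F p.1 x) (m s.2 (Ginv F q.1 y) (Ginv F r.1 z)) := by
        refine Finset.sum_congr rfl fun p _ => Finset.sum_congr rfl fun q _ =>
          Finset.sum_congr rfl fun r _ => ?_
        rw [← sub_eq_zero, ← Finset.sum_sub_distrib]
        exact hm2 r.2 (Ginv F p.1 x) (Ginv F q.1 y) (Ginv F r.1 z)
    _ = ∑ p ∈ antidiagonal n, ∑ q ∈ antidiagonal p.2, ∑ r ∈ antidiagonal q.2,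
          ∑ s ∈ antidiagonal r.2,
            m p.1 (Ginv F q.1 x) (m r.1 (Ginv F s.1 y) (Ginv F s.2 z)) :=
        (Vnorm F m n x y z).symm
    _ = _ := by
        refine Finset.sum_congr rfl fun p _ => Finset.sum_congr rfl fun q _ => ?_
        symm
        rw [Pser_apply]
        simp only [map_sum, LinearMap.sum_apply]

lemma lemAssoc (hF0 : F 0 = LinearMap.id)
    (hm2 : ∀ (k : ℕ) (x y z : A), ∑ p ∈ antidiagonal k,
      (m p.1 (m p.2 x y) z - m p.1 x (m p.2 y z)) = 0)
    (w : ℕ) (x y z : A) :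
    ∑ c ∈ antidiagonal w,
        (Mt F m c.1 (Mt F m c.2 x y) z - Mt F m c.1 x (Mt F m c.2 y z)) = 0 := by
  rw [Finset.sum_sub_distrib, lemT1 F m hF0 w x y z, lemT2 F m hF0 w x y z,
    sub_eq_zero]
  refine Finset.sum_congr rfl fun c _ => ?_
  have e1 : (F c.1) (∑ p ∈ antidiagonal c.2, ∑ q ∈ antidiagonal p.2,
      m p.1 (Pser m (Ginv F) q.2 x y) (Ginv F q.1 z))
      = ∑ p ∈ antidiagonal c.2, ∑ q ∈ antidiagonal p.2,
        F c.1 (m p.1 (Pser m (Ginv F) q.2 x y) (Ginv F q.1 z)) := by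
    simp only [map_sum]
  have e2 : (F c.1) (∑ p ∈ antidiagonal c.2, ∑ q ∈ antidiagonal p.2,
      m p.1 (Ginv F q.1 x) (Pser m (Ginv F) q.2 y z))
      = ∑ p ∈ antidiagonal c.2, ∑ q ∈ antidiagonal p.2,
        F c.1 (m p.1 (Ginv F q.1 x) (Pser m (Ginv F) q.2 y z)) := by
    simp only [map_sum]
  rw [← e1, ← e2, lemUV F m hm2 c.2 x y z]

end CoreA

section CoreC
variable {K A : Type*} [Field K] [AddCommGroup A] [Module K A]

lemma Mt_zero (F : ℕ → A →ₗ[K] A) (m : ℕ → A →ₗ[K] A →ₗ[K] A)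
    (hF0 : F 0 = LinearMap.id) : Mt F m 0 = m 0 := by
  ext x y
  simp [Mt_apply, hF0, Ginv_zero]

lemma Mt_congr (F F' : ℕ → A →ₗ[K] A) (m : ℕ → A →ₗ[K] A →ₗ[K] A) (k : ℕ)
    (h : ∀ j ≤ k, F j = F' j) : Mt F m k = Mt F' m k := by
  ext x y
  rw [Mt_apply, Mt_apply]
  refine Finset.sum_congr rfl fun p hp => ?_
  have hp' := Finset.HasAntidiagonal.mem_antidiagonal.mp hp
  refine Finset.sum_congr rfl fun q hq => ?_
  have hq' := Finset.HasAntidiagonal.mem_antidiagonal.mp hq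
  refine Finset.sum_congr rfl fun v hv => ?_
  have hv' := Finset.HasAntidiagonal.mem_antidiagonal.mp hv
  rw [h p.1 (by omega), Ginv_congr F F' v.1 (fun j hj => h j (by omega)),
    Ginv_congr F F' v.2 (fun j hj => h j (by omega))]

lemma lemComp (F F' : ℕ → A →ₗ[K] A) (m : ℕ → A →ₗ[K] A →ₗ[K] A) (k : ℕ)
    (hk : 1 ≤ k) (hF0 : F 0 = LinearMap.id) (hF'0 : F' 0 = LinearMap.id)
    (hagree : ∀ j < k, F' j = F j) (hF'k : F' k = 0) (x y : A) :
    Mt F m k x y - Mt F' m k x y + m 0 (F k x) y + m 0 x (F k y)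
      = F k (m 0 x y) := by
  have h1 := lemE F m hF0 k x y
  have h2 := lemE F' m hF'0 k x y
  -- difference of right-hand sides
  have hR : ∑ p ∈ antidiagonal k, (F p.1 (m p.2 x y) - F' p.1 (m p.2 x y))
      = F k (m 0 x y) := by
    rw [Finset.sum_eq_single (k, 0)]
    · simp [hF'k]
    · rintro ⟨a, b⟩ hab hne
      have hab' := Finset.HasAntidiagonal.mem_antidiagonal.mp hab
      have ha : a < k := by
        rcases Nat.lt_or_ge a k with h | h
        · exact h
        · exfalso; exact hne (by simp at hab' ⊢ <;> omega)
      rw [hagree a ha]; simp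
    · intro h
      exact absurd (Finset.HasAntidiagonal.mem_antidiagonal.mpr (by simp)) h
  -- difference of left-hand sides
  have hL : ∑ a ∈ antidiagonal k,
        (∑ b ∈ antidiagonal a.2, Mt F m a.1 (F b.1 x) (F b.2 y)
          - ∑ b ∈ antidiagonal a.2, Mt F' m a.1 (F' b.1 x) (F' b.2 y))
      = (Mt F m k x y - Mt F' m k x y) + (m 0 (F k x) y + m 0 x (F k y)) := by
    have hsub : ({(k, 0), (0, k)} : Finset (ℕ × ℕ)) ⊆ antidiagonal k := by
      intro c hc
      simp only [Finset.mem_insert, Finset.mem_singleton] at hc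
      rcases hc with rfl | rfl <;> simp [Finset.HasAntidiagonal.mem_antidiagonal]
    rw [← Finset.sum_subset hsub ?side]
    case side =>
      rintro ⟨a, b⟩ hab hnot
      have hab' := Finset.HasAntidiagonal.mem_antidiagonal.mp hab
      simp only [Finset.mem_insert, Finset.mem_singleton, Prod.mk.injEq, not_or,
        not_and] at hnot
      have ha1 : 0 < a := by omega
      have ha2 : a < k := by omega
      rw [sub_eq_zero]
      have hMt : Mt F m a = Mt F' m a :=
        Mt_congr F F' m a (fun j hj => (hagree j (by omega)).symm)
      refine Finset.sum_congr rfl fun c hc => ?_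
      have hc' := Finset.HasAntidiagonal.mem_antidiagonal.mp hc
      rw [hMt, hagree c.1 (by omega), hagree c.2 (by omega)]
    rw [Finset.sum_pair (by intro h; rw [Prod.mk.injEq] at h; omega)]
    have e1 : ∑ b ∈ antidiagonal (0:ℕ), Mt F m k (F b.1 x) (F b.2 y)
        - ∑ b ∈ antidiagonal (0:ℕ), Mt F' m k (F' b.1 x) (F' b.2 y)
        = Mt F m k x y - Mt F' m k x y := by
      simp [Finset.Nat.antidiagonal_zero, hF0, hF'0]
    have hsub2 : ({(k, 0), (0, k)} : Finset (ℕ × ℕ)) ⊆ antidiagonal k := hsub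
    have e2 : ∑ b ∈ antidiagonal k, Mt F m 0 (F b.1 x) (F b.2 y)
        - ∑ b ∈ antidiagonal k, Mt F' m 0 (F' b.1 x) (F' b.2 y)
        = m 0 (F k x) y + m 0 x (F k y) := by
      rw [← Finset.sum_sub_distrib, ← Finset.sum_subset hsub2 ?side2]
      case side2 =>
        rintro ⟨a, b⟩ hab hnot
        have hab' := Finset.HasAntidiagonal.mem_antidiagonal.mp hab
        simp only [Finset.mem_insert, Finset.mem_singleton, Prod.mk.injEq, not_or,
          not_and] at hnot
        have ha2 : a < k := by omega
        have hb2 : b < k := by omega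
        rw [Mt_zero F m hF0, Mt_zero F' m hF'0, hagree a ha2, hagree b hb2, sub_self]
      rw [Finset.sum_pair (by intro h; rw [Prod.mk.injEq] at h; omega)]
      rw [Mt_zero F m hF0, Mt_zero F' m hF'0]
      simp [hF0, hF'0, hF'k]
    simp only [e1]
    rw [e2]
  rw [Finset.sum_sub_distrib] at hL hR
  rw [h1, h2] at hL
  rw [hL] at hR
  rw [← hR]
  abel

end CoreC

section Main
variable {K A : Type*} [Field K] [AddCommGroup A] [Module K A]
open scoped Classical

/-- The gauge transformation, built recursively by killing the lowest
nonvanishing coefficient of the pushed-forward deformation at each step. -/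
noncomputable def Fdef (m₀ : A →ₗ[K] A →ₗ[K] A) (m : ℕ → A →ₗ[K] A →ₗ[K] A) :
    ℕ → A →ₗ[K] A
  | 0 => LinearMap.id
  | (k+1) =>
    if h : ∃ g : A →ₗ[K] A, ∀ x y : A,
        Mt (fun j => if _hj : j < k+1 then Fdef m₀ m j else 0) m (k+1) x y
          = m₀ x (g y) - g (m₀ x y) + m₀ (g x) y
    then h.choose else 0
  decreasing_by all_goals exact _hj

/-- Truncation of the gauge transformation. -/
noncomputable def Ftr (m₀ : A →ₗ[K] A →ₗ[K] A) (m : ℕ → A →ₗ[K] A →ₗ[K] A)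
    (n : ℕ) : ℕ → A →ₗ[K] A :=
  fun j => if _hj : j < n then Fdef m₀ m j else 0

lemma Fdef_zero (m₀ : A →ₗ[K] A →ₗ[K] A) (m : ℕ → A →ₗ[K] A →ₗ[K] A) :
    Fdef m₀ m 0 = LinearMap.id := by rw [Fdef]

lemma Fdef_succ (m₀ : A →ₗ[K] A →ₗ[K] A) (m : ℕ → A →ₗ[K] A →ₗ[K] A) (k : ℕ) :
    Fdef m₀ m (k+1) =
      if h : ∃ g : A →ₗ[K] A, ∀ x y : A,
          Mt (Ftr m₀ m (k+1)) m (k+1) x y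
            = m₀ x (g y) - g (m₀ x y) + m₀ (g x) y
      then h.choose else 0 := by
  rw [Fdef]
  rfl

end Main

/-- If the squaring map `Sq : H²(A,A) → H³(A,A)`, `[φ] ↦ [φ∘φ]`, is
injective, then `A` is formally rigid: every formal deformation of `A` is
equivalent to the trivial one. Injectivity of `Sq` is expressed on cocycle
representatives: if `φ∘φ` and `ψ∘ψ` differ by a 3-coboundary then `φ` and `ψ`
differ by a 2-coboundary. -/
theorem stmt_11 {K A : Type*} [Field K] [CharZero K] [AddCommGroup A] [Module K A]
    (m₀ : A →ₗ[K] A →ₗ[K] A)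
    (hassoc : ∀ x y z : A, m₀ (m₀ x y) z = m₀ x (m₀ y z))
    (hSq : ∀ φ ψ : A →ₗ[K] A →ₗ[K] A, IsTwoCocycle m₀ φ → IsTwoCocycle m₀ ψ →
      (∃ ν : A →ₗ[K] A →ₗ[K] A, ∀ x y z : A,
        (φ (φ x y) z - φ x (φ y z)) - (ψ (ψ x y) z - ψ x (ψ y z)) =
          m₀ x (ν y z) - ν (m₀ x y) z + ν x (m₀ y z) - m₀ (ν x y) z) →
      ∃ g : A →ₗ[K] A, ∀ x y : A,
        φ x y - ψ x y = m₀ x (g y) - g (m₀ x y) + m₀ (g x) y) :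
    ∀ m : ℕ → A →ₗ[K] A →ₗ[K] A, IsDeformationOf m₀ m →
      AreEquivalentDeformations m (TrivialDeformation m₀) := by
  intro m hm
  obtain ⟨hm0, hm2⟩ := hm
  have hF0 : Fdef m₀ m 0 = LinearMap.id := Fdef_zero m₀ m
  -- the inductive trivialization
  have key : ∀ k, 1 ≤ k → Mt (Fdef m₀ m) m k = 0 := by
    intro k
    induction k using Nat.strong_induction_on with
    | _ k IH =>
      intro hk
      obtain ⟨k', rfl⟩ : ∃ k', k = k' + 1 := ⟨k - 1, by omega⟩
      have hF'0 : Ftr m₀ m (k'+1) 0 = LinearMap.id := by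
        simp only [Ftr, Nat.succ_pos, dif_pos]
        exact Fdef_zero m₀ m
      have hagree : ∀ j < k'+1, Ftr m₀ m (k'+1) j = Fdef m₀ m j := by
        intro j hj; simp [Ftr, hj]
      have hF'k : Ftr m₀ m (k'+1) (k'+1) = 0 := by simp [Ftr]
      have hMt'0 : Mt (Ftr m₀ m (k'+1)) m 0 = m₀ := by
        rw [Mt_zero _ m hF'0, hm0]
      have hMt'small : ∀ j, 1 ≤ j → j < k'+1 → Mt (Ftr m₀ m (k'+1)) m j = 0 := by
        intro j h1 h2
        rw [Mt_congr (Ftr m₀ m (k'+1)) (Fdef m₀ m) m j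
          (fun i hi => hagree i (by omega))]
        exact IH j h2 h1
      -- φ is a 2-cocycle
      have hcocA : ∀ x y z : A,
          m₀ (Mt (Ftr m₀ m (k'+1)) m (k'+1) x y) z
            - m₀ x (Mt (Ftr m₀ m (k'+1)) m (k'+1) y z)
          + (Mt (Ftr m₀ m (k'+1)) m (k'+1) (m₀ x y) z
            - Mt (Ftr m₀ m (k'+1)) m (k'+1) x (m₀ y z)) = 0 := by
        intro x y z
        have h0 := lemAssoc (Ftr m₀ m (k'+1)) m hF'0 hm2 (k'+1) x y z
        have hsub : ({(0, k'+1), (k'+1, 0)} : Finset (ℕ × ℕ))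
            ⊆ antidiagonal (k'+1) := by
          intro c hc
          simp only [Finset.mem_insert, Finset.mem_singleton] at hc
          rcases hc with rfl | rfl <;> simp [Finset.mem_antidiagonal]
        rw [← Finset.sum_subset hsub ?hside] at h0
        case hside =>
          rintro ⟨a, b⟩ hab hnot
          have hab' := Finset.HasAntidiagonal.mem_antidiagonal.mp hab
          simp only [Finset.mem_insert, Finset.mem_singleton, Prod.mk.injEq,
            not_or, not_and] at hnot
          rw [hMt'small a (by omega) (by omega)]
          simp
        rw [Finset.sum_pair (by simp)] at h0
        simpa [hMt'0] using h0
      have hcoc : IsTwoCocycle m₀ (Mt (Ftr m₀ m (k'+1)) m (k'+1)) := by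
        intro x y z
        have h := hcocA x y z
        have e : m₀ x (Mt (Ftr m₀ m (k'+1)) m (k'+1) y z)
            - Mt (Ftr m₀ m (k'+1)) m (k'+1) (m₀ x y) z
            + Mt (Ftr m₀ m (k'+1)) m (k'+1) x (m₀ y z)
            - m₀ (Mt (Ftr m₀ m (k'+1)) m (k'+1) x y) z
            = -(m₀ (Mt (Ftr m₀ m (k'+1)) m (k'+1) x y) z
              - m₀ x (Mt (Ftr m₀ m (k'+1)) m (k'+1) y z)
              + (Mt (Ftr m₀ m (k'+1)) m (k'+1) (m₀ x y) z
                - Mt (Ftr m₀ m (k'+1)) m (k'+1) x (m₀ y z))) := by abel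
        rw [e, h, neg_zero]
      -- the square of φ is the coboundary of ν
      have hsqA : ∀ x y z : A,
          (m₀ (Mt (Ftr m₀ m (k'+1)) m (k'+1 + (k'+1)) x y) z
            - m₀ x (Mt (Ftr m₀ m (k'+1)) m (k'+1 + (k'+1)) y z))
          + ((Mt (Ftr m₀ m (k'+1)) m (k'+1)
                (Mt (Ftr m₀ m (k'+1)) m (k'+1) x y) z
              - Mt (Ftr m₀ m (k'+1)) m (k'+1) x
                (Mt (Ftr m₀ m (k'+1)) m (k'+1) y z))
            + (Mt (Ftr m₀ m (k'+1)) m (k'+1 + (k'+1)) (m₀ x y) z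
              - Mt (Ftr m₀ m (k'+1)) m (k'+1 + (k'+1)) x (m₀ y z))) = 0 := by
        intro x y z
        have h0 := lemAssoc (Ftr m₀ m (k'+1)) m hF'0 hm2 (k'+1 + (k'+1)) x y z
        have hsub : ({(0, k'+1 + (k'+1)), (k'+1, k'+1), (k'+1 + (k'+1), 0)} :
            Finset (ℕ × ℕ)) ⊆ antidiagonal (k'+1 + (k'+1)) := by
          intro c hc
          simp only [Finset.mem_insert, Finset.mem_singleton] at hc
          rcases hc with rfl | rfl | rfl <;> simp [Finset.mem_antidiagonal]
        rw [← Finset.sum_subset hsub ?hside2] at h0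
        case hside2 =>
          rintro ⟨a, b⟩ hab hnot
          have hab' := Finset.HasAntidiagonal.mem_antidiagonal.mp hab
          simp only [Finset.mem_insert, Finset.mem_singleton, Prod.mk.injEq,
            not_or, not_and] at hnot
          rcases Nat.lt_or_ge a (k'+1) with hlt | hge
          · rw [hMt'small a (by omega) (by omega)]
            simp
          · rw [hMt'small b (by omega) (by omega)]
            simp
        rw [Finset.sum_insert (by simp <;> omega), Finset.sum_insert (by simp <;> omega),
          Finset.sum_singleton] at h0
        simpa [hMt'0] using h0
      have hexists : ∃ ν : A →ₗ[K] A →ₗ[K] A, ∀ x y z : A,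
          (Mt (Ftr m₀ m (k'+1)) m (k'+1)
              (Mt (Ftr m₀ m (k'+1)) m (k'+1) x y) z
            - Mt (Ftr m₀ m (k'+1)) m (k'+1) x
              (Mt (Ftr m₀ m (k'+1)) m (k'+1) y z))
          - ((0 : A →ₗ[K] A →ₗ[K] A) ((0 : A →ₗ[K] A →ₗ[K] A) x y) z
            - (0 : A →ₗ[K] A →ₗ[K] A) x ((0 : A →ₗ[K] A →ₗ[K] A) y z)) =
            m₀ x (ν y z) - ν (m₀ x y) z + ν x (m₀ y z) - m₀ (ν x y) z := by
        refine ⟨Mt (Ftr m₀ m (k'+1)) m (k'+1 + (k'+1)), fun x y z => ?_⟩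
        simp only [LinearMap.zero_apply, map_zero, sub_zero]
        rw [← sub_eq_zero]
        have e : (Mt (Ftr m₀ m (k'+1)) m (k'+1)
              (Mt (Ftr m₀ m (k'+1)) m (k'+1) x y) z
            - Mt (Ftr m₀ m (k'+1)) m (k'+1) x
              (Mt (Ftr m₀ m (k'+1)) m (k'+1) y z))
            - (m₀ x (Mt (Ftr m₀ m (k'+1)) m (k'+1 + (k'+1)) y z)
              - Mt (Ftr m₀ m (k'+1)) m (k'+1 + (k'+1)) (m₀ x y) z
              + Mt (Ftr m₀ m (k'+1)) m (k'+1 + (k'+1)) x (m₀ y z)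
              - m₀ (Mt (Ftr m₀ m (k'+1)) m (k'+1 + (k'+1)) x y) z)
            = (m₀ (Mt (Ftr m₀ m (k'+1)) m (k'+1 + (k'+1)) x y) z
              - m₀ x (Mt (Ftr m₀ m (k'+1)) m (k'+1 + (k'+1)) y z))
            + ((Mt (Ftr m₀ m (k'+1)) m (k'+1)
                  (Mt (Ftr m₀ m (k'+1)) m (k'+1) x y) z
                - Mt (Ftr m₀ m (k'+1)) m (k'+1) x
                  (Mt (Ftr m₀ m (k'+1)) m (k'+1) y z))
              + (Mt (Ftr m₀ m (k'+1)) m (k'+1 + (k'+1)) (m₀ x y) z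
                - Mt (Ftr m₀ m (k'+1)) m (k'+1 + (k'+1)) x (m₀ y z))) := by abel
        rw [e]
        exact hsqA x y z
      have hzero : IsTwoCocycle m₀ (0 : A →ₗ[K] A →ₗ[K] A) := by
        intro x y z; simp
      obtain ⟨g, hg⟩ := hSq (Mt (Ftr m₀ m (k'+1)) m (k'+1)) 0 hcoc hzero hexists
      have hex : ∃ g : A →ₗ[K] A, ∀ x y : A,
          Mt (Ftr m₀ m (k'+1)) m (k'+1) x y
            = m₀ x (g y) - g (m₀ x y) + m₀ (g x) y :=
        ⟨g, fun x y => by simpa using hg x y⟩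
      have hFk : Fdef m₀ m (k'+1) = hex.choose := by
        rw [Fdef_succ, dif_pos hex]
      have hspec : ∀ x y : A, Mt (Ftr m₀ m (k'+1)) m (k'+1) x y
          = m₀ x (Fdef m₀ m (k'+1) y) - Fdef m₀ m (k'+1) (m₀ x y)
            + m₀ (Fdef m₀ m (k'+1) x) y := by
        rw [hFk]; exact hex.choose_spec
      -- conclude
      apply LinearMap.ext; intro x; apply LinearMap.ext; intro y
      simp only [LinearMap.zero_apply]
      have hcomp := lemComp (Fdef m₀ m) (Ftr m₀ m (k'+1)) m (k'+1) (by omega)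
        hF0 hF'0 hagree hF'k x y
      rw [hm0] at hcomp
      rw [hspec x y] at hcomp
      have hX : Mt (Fdef m₀ m) m (k'+1) x y = 0 := by
        linear_combination (norm := module) hcomp
      exact hX
  -- assemble the equivalence
  refine ⟨Fdef m₀ m, hF0, ?_⟩
  intro k x y
  rw [← lemE (Fdef m₀ m) m hF0 k x y]
  refine Finset.sum_congr rfl fun a _ => ?_
  rcases Nat.eq_zero_or_pos a.1 with h | h
  · rw [h]
    have h1 : Mt (Fdef m₀ m) m 0 = m₀ := by rw [Mt_zero _ _ hF0, hm0]
    have h2 : TrivialDeformation m₀ 0 = m₀ := by simp [TrivialDeformation]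
    rw [h1, h2]
  · have h1 : Mt (Fdef m₀ m) m a.1 = 0 := key a.1 h
    have h2 : TrivialDeformation m₀ a.1 = 0 := by
      simp only [TrivialDeformation, if_neg (by omega : ¬ a.1 = 0)]
    rw [h1, h2]
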